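/- In a connected graph G in which every vertex of degree other than 2 is a cut-vertex and there exists at least one non-cut vertex, every non-cut vertex has degree exactly 2, and there exist two adjacent non-cut vertices (both of degree 2). -/

import Mathlib

/-- A vertex `v` of a graph `G` is a cut-vertex if deleting it disconnects
the graph, i.e. the induced graph on the complement of `{v}` is not connected. -/
def SimpleGraph.IsCutVertex' {V : Type*} (G : SimpleGraph V) (v : V) : Prop :=
  ¬ (G.induce {u | u ≠ v}).Connected

namespace CutAux

open SimpleGraph

variable {V : Type*} {G : SimpleGraph V}

/-- reachability within a vertex set -/
def ReachIn (G : SimpleGraph V) (s : Set V) (u v : V) : Prop :=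
  ∃ p : G.Walk u v, ∀ x ∈ p.support, x ∈ s

lemma ReachIn.refl {s : Set V} {u : V} (hu : u ∈ s) : ReachIn G s u u :=
  ⟨SimpleGraph.Walk.nil, by simp [hu]⟩

lemma ReachIn.symm {s : Set V} {u v : V} (h : ReachIn G s u v) : ReachIn G s v u := by
  obtain ⟨p, hp⟩ := h
  exact ⟨p.reverse, by simpa [SimpleGraph.Walk.support_reverse] using hp⟩

lemma ReachIn.trans {s : Set V} {u v w : V} (h1 : ReachIn G s u v) (h2 : ReachIn G s v w) :
    ReachIn G s u w := by
  obtain ⟨p, hp⟩ := h1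
  obtain ⟨q, hq⟩ := h2
  refine ⟨p.append q, ?_⟩
  intro x hx
  rcases (SimpleGraph.Walk.mem_support_append_iff p q).mp hx with h | h
  · exact hp x h
  · exact hq x h

lemma ReachIn.adj {s : Set V} {u v : V} (h : G.Adj u v) (hu : u ∈ s) (hv : v ∈ s) :
    ReachIn G s u v :=
  ⟨SimpleGraph.Walk.cons h SimpleGraph.Walk.nil, by
    intro x hx
    simp only [SimpleGraph.Walk.support_cons, SimpleGraph.Walk.support_nil,
      List.mem_cons, List.mem_singleton] at hx
    rcases hx with rfl | hx | hx
    · exact hu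
    · exact hx ▸ hv
    · simp at hx⟩

lemma ReachIn.mono {s s' : Set V} (hss : s ⊆ s') {u v : V} (h : ReachIn G s u v) :
    ReachIn G s' u v := by
  obtain ⟨p, hp⟩ := h
  exact ⟨p, fun x hx => hss (hp x hx)⟩

lemma ReachIn.mem_left {s : Set V} {u v : V} (h : ReachIn G s u v) : u ∈ s := by
  obtain ⟨p, hp⟩ := h
  exact hp u p.start_mem_support

/-- lift a walk with support inside `s` to a reachability statement in `G.induce s` -/
lemma reachable_induce_of_walk {s : Set V} :
    ∀ {u v : V} (p : G.Walk u v), (∀ x ∈ p.support, x ∈ s) →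
      ∀ (hu : u ∈ s) (hv : v ∈ s), (G.induce s).Reachable ⟨u, hu⟩ ⟨v, hv⟩ := by
  intro u v p
  induction p with
  | nil => intro _ hu hv; exact SimpleGraph.Reachable.refl _
  | @cons a b c h p ih =>
    intro hs hu hv
    have hb : b ∈ s := hs b (by simp)
    have hadj : (G.induce s).Adj ⟨a, hu⟩ ⟨b, hb⟩ := h
    exact hadj.reachable.trans (ih (fun x hx => hs x (by simp [hx])) hb hv)

/-- project a reachability statement in `G.induce s` to `ReachIn` -/
lemma reachIn_of_reachable_induce {s : Set V} {a b : ↑s}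
    (h : (G.induce s).Reachable a b) : ReachIn G s a.val b.val := by
  obtain ⟨q⟩ := h
  refine ⟨q.map (SimpleGraph.Embedding.induce s).toHom, ?_⟩
  intro x hx
  replace hx : x ∈ q.support.map (SimpleGraph.Embedding.induce (G := G) s).toHom := by
    rw [← SimpleGraph.Walk.support_map]; exact hx
  rw [List.mem_map] at hx
  obtain ⟨a', _, rfl⟩ := hx
  exact a'.2

lemma induce_connected_iff {s : Set V} :
    (G.induce s).Connected ↔ s.Nonempty ∧ ∀ u ∈ s, ∀ v ∈ s, ReachIn G s u v := by
  constructor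
  · intro h
    obtain ⟨x⟩ := h.nonempty
    refine ⟨⟨x.val, x.2⟩, fun u hu v hv => ?_⟩
    exact reachIn_of_reachable_induce (h.preconnected ⟨u, hu⟩ ⟨v, hv⟩)
  · rintro ⟨⟨x, hx⟩, h⟩
    rw [SimpleGraph.connected_iff]
    refine ⟨?_, ⟨⟨x, hx⟩⟩⟩
    rintro ⟨u, hu⟩ ⟨v, hv⟩
    obtain ⟨p, hp⟩ := h u hu v hv
    exact reachable_induce_of_walk p hp hu hv

/-- project reachability within a set of an induced graph down to the base graph. -/
lemma reachIn_val_of_reachIn_induce {t : Set V} {S : Set ↑t} {a b : ↑t}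
    (h : ReachIn (G.induce t) S a b) : ReachIn G (Subtype.val '' S) a.val b.val := by
  obtain ⟨p, hp⟩ := h
  refine ⟨p.map (SimpleGraph.Embedding.induce t).toHom, ?_⟩
  intro x hx
  replace hx : x ∈ p.support.map (SimpleGraph.Embedding.induce (G := G) t).toHom := by
    rw [← SimpleGraph.Walk.support_map]; exact hx
  rw [List.mem_map] at hx
  obtain ⟨a', ha', rfl⟩ := hx
  exact ⟨a', hp a' ha', rfl⟩

lemma degree_induce_eq [Fintype V] [DecidableRel G.Adj]
    {t : Set V} [DecidablePred (· ∈ t)] [DecidableRel (G.induce t).Adj] {v : V} (hv : v ∈ t)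
    (hcl : ∀ w, G.Adj v w → w ∈ t) :
    (G.induce t).degree ⟨v, hv⟩ = G.degree v := by
  rw [← SimpleGraph.card_neighborSet_eq_degree, ← SimpleGraph.card_neighborSet_eq_degree]
  refine Fintype.card_congr ⟨fun a => ⟨a.1.1, a.2⟩, fun w => ⟨⟨w.1, hcl w.1 w.2⟩, w.2⟩,
    fun a => ?_, fun w => rfl⟩
  apply Subtype.ext
  apply Subtype.ext
  rfl

end CutAux

open SimpleGraph CutAux

theorem cut_aux : ∀ (n : ℕ) {V : Type*} [Fintype V] [DecidableEq V] (G : SimpleGraph V)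
    [DecidableRel G.Adj], Fintype.card V ≤ n → G.Connected → 2 ≤ Fintype.card V →
    ∀ r : V, (∀ v : V, v ≠ r → G.degree v ≠ 2 → ¬ (G.induce {u | u ≠ v}).Connected) →
    ∃ u v : V, G.Adj u v ∧ u ≠ r ∧ v ≠ r ∧ (G.induce {w | w ≠ u}).Connected ∧
      (G.induce {w | w ≠ v}).Connected ∧ G.degree u = 2 ∧ G.degree v = 2 := by
  intro n
  induction n with
  | zero =>
    intro V _ _ G _ hn _ hcard _ _
    omega
  | succ n ih =>
    intro V _ _ G _ hn hconn hcard r hcut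
    by_cases hnc : ∀ v : V, (G.induce {u | u ≠ v}).Connected
    · -- no cut vertices at all
      have hdeg : ∀ v : V, v ≠ r → G.degree v = 2 := by
        intro v hvr
        by_contra hd
        exact hcut v hvr hd (hnc v)
      obtain ⟨x, hxr⟩ := Fintype.exists_ne_of_one_lt_card (by omega) r
      have hx2 : G.degree x = 2 := hdeg x hxr
      have hcard2 : (G.neighborFinset x).card = 2 := hx2
      have h1 : (G.neighborFinset x).card - 1 ≤ ((G.neighborFinset x).erase r).card :=
        Finset.pred_card_le_card_erase
      rw [hcard2] at h1
      have h2 : 0 < ((G.neighborFinset x).erase r).card := by omega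
      obtain ⟨y, hy⟩ := Finset.card_pos.mp h2
      have hyr : y ≠ r := Finset.ne_of_mem_erase hy
      have hyx : G.Adj x y := by
        have := Finset.mem_of_mem_erase hy
        rwa [SimpleGraph.mem_neighborFinset] at this
      exact ⟨x, y, hyx, hxr, hyr, hnc x, hnc y, hx2, hdeg y hyr⟩
    · push_neg at hnc
      obtain ⟨c, hc⟩ := hnc
      set s : Set V := {u | u ≠ c} with hs_def
      obtain ⟨a0, ha0c⟩ := Fintype.exists_ne_of_one_lt_card (by omega) c
      have hsne : s.Nonempty := ⟨a0, ha0c⟩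
      have hnotall : ¬ ∀ u ∈ s, ∀ v ∈ s, ReachIn G s u v := by
        intro h
        exact hc (induce_connected_iff.mpr ⟨hsne, h⟩)
      push_neg at hnotall
      obtain ⟨a, ha, b, hb, hab⟩ := hnotall
      -- choose x ∈ s with r not in the component of x, and a vertex y outside the
      -- component of x together with c
      have hchoice : ∃ x, x ∈ s ∧ ¬ ReachIn G s x r ∧
          ∃ y, y ∉ ({u | u ∈ s ∧ ReachIn G s x u} ∪ {c} : Set V) := by
        by_cases hrc : r = c
        · refine ⟨a, ha, fun h => ?_, b, fun hmem => ?_⟩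
          · have : r ∈ s := h.symm.mem_left
            rw [hrc] at this
            exact this rfl
          · rcases hmem with ⟨_, hre⟩ | hbc
            · exact hab hre
            · exact hb hbc
        · have hrs : r ∈ s := hrc
          by_cases hra : ReachIn G s r a
          · refine ⟨b, hb, fun h => ?_, r, fun hmem => ?_⟩
            · exact hab (hra.symm.trans h.symm)
            · rcases hmem with ⟨_, hre⟩ | hrc'
              · exact hab (hra.symm.trans hre.symm)
              · exact hrc hrc'
          · refine ⟨a, ha, fun h => ?_, r, fun hmem => ?_⟩
            · exact hra h.symm
            · rcases hmem with ⟨_, hre⟩ | hrc'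
              · exact hra hre.symm
              · exact hrc hrc'
      obtain ⟨x, hxs, hxr, y, hyt⟩ := hchoice
      set K : Set V := {u | u ∈ s ∧ ReachIn G s x u} with hK_def
      set t : Set V := K ∪ {c} with ht_def
      have hxK : x ∈ K := ⟨hxs, ReachIn.refl hxs⟩
      have hct : c ∈ t := Or.inr rfl
      have hrK : r ∉ K := fun h => hxr h.2
      have hclosed : ∀ v ∈ K, ∀ w, G.Adj v w → w ∈ t := by
        intro v hv w hw
        by_cases hwc : w = c
        · exact Or.inr hwc
        · exact Or.inl ⟨hwc, hv.2.trans (ReachIn.adj hw hv.1 hwc)⟩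
      -- everything in K reaches c within t
      have hreach_c : ∀ (u m : V) (w : G.Walk u m), m = c → u ∈ K → ReachIn G t u c := by
        intro u m w
        induction w with
        | nil =>
          intro hmc hu
          exact absurd hmc hu.1
        | @cons p q m' h w ihw =>
          intro hmc hp
          by_cases hq : q = c
          · subst hq
            exact ReachIn.adj h (Or.inl hp) hct
          · have hqK : q ∈ K := ⟨hq, hp.2.trans (ReachIn.adj h hp.1 hq)⟩
            exact (ReachIn.adj h (Or.inl hp) (Or.inl hqK)).trans (ihw hmc hqK)
      have hreach_c' : ∀ u ∈ t, ReachIn G t u c := by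
        intro u hu
        rcases hu with hu | hu
        · obtain ⟨w⟩ := hconn u c
          exact hreach_c u c w rfl hu
        · have huc : u = c := hu
          subst huc
          exact ReachIn.refl hct
      have hHconn : (G.induce t).Connected := by
        refine induce_connected_iff.mpr ⟨⟨c, hct⟩, fun u hu v hv => ?_⟩
        exact (hreach_c' u hu).trans (hreach_c' v hv).symm
      haveI : DecidablePred (· ∈ t) := Classical.decPred _
      haveI : DecidableRel (G.induce t).Adj := fun a b => Classical.dec _
      have hcardlt : Fintype.card ↑t < Fintype.card V := Fintype.card_subtype_lt (x := y) hyt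
      have hxc : x ≠ c := hxs
      have hcard2t : 2 ≤ Fintype.card ↑t := by
        refine Fintype.one_lt_card_iff_nontrivial.mpr ⟨⟨x, Or.inl hxK⟩, ⟨c, hct⟩, ?_⟩
        intro hh
        exact hxc (congrArg Subtype.val hh)
      -- if deleting a vertex of K keeps G.induce t connected, then deleting it from G
      -- keeps G connected
      have htransfer : ∀ (a : ↑t), a.val ∈ K →
          ((G.induce t).induce {w : ↑t | w ≠ a}).Connected →
          (G.induce {u | u ≠ a.val}).Connected := by
        intro a haK hconn'
        have hcv : c ≠ a.val := fun h => haK.1 h.symm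
        have hconn'' := induce_connected_iff.mp hconn'
        -- every vertex of t other than a reaches c avoiding a
        have hHr : ∀ u (hu : u ∈ t), u ≠ a.val → ReachIn G {w | w ≠ a.val} u c := by
          intro u hu hua
          have h1 : ReachIn (G.induce t) {w : ↑t | w ≠ a} ⟨u, hu⟩ ⟨c, hct⟩ :=
            hconn''.2 ⟨u, hu⟩ (fun h => hua (congrArg Subtype.val h))
              ⟨c, hct⟩ (fun h => hcv (congrArg Subtype.val h))
          have h2 := reachIn_val_of_reachIn_induce h1
          refine h2.mono ?_
          rintro _ ⟨w, hw, rfl⟩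
          exact fun h => hw (Subtype.ext h)
        -- every vertex other than a reaches c avoiding a
        have havoid : ∀ (p m : V) (w : G.Walk p m), m = c → p ≠ a.val →
            ReachIn G {w | w ≠ a.val} p c := by
          intro p m w
          induction w with
          | nil =>
            intro hmc hpv
            subst hmc
            exact ReachIn.refl (fun hh => hcv hh)
          | @cons p q m' h w ihw =>
            intro hmc hpv
            by_cases hqv : q = a.val
            · have h2 : G.Adj a.val p := by rw [← hqv]; exact h.symm
              have hpt : p ∈ t := hclosed a.val haK p h2
              exact hHr p hpt hpv
            · exact (ReachIn.adj h hpv hqv).trans (ihw hmc hqv)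
        refine induce_connected_iff.mpr ⟨⟨c, fun h => hcv h⟩, fun p hp q hq => ?_⟩
        obtain ⟨w1⟩ := hconn p c
        obtain ⟨w2⟩ := hconn q c
        exact (havoid p c w1 rfl hp).trans (havoid q c w2 rfl hq).symm
      -- hypothesis transfer for the induced graph
      have hypH : ∀ (v' : ↑t), v' ≠ ⟨c, hct⟩ → (G.induce t).degree v' ≠ 2 →
          ¬ ((G.induce t).induce {u | u ≠ v'}).Connected := by
        intro v' hv'c hdeg hcon
        have hvK : v'.val ∈ K := by
          rcases v'.2 with h | h
          · exact h
          · exact absurd (Subtype.ext (show _ = c from h)) hv'c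
        have hdegeq : (G.induce t).degree ⟨v'.val, v'.2⟩ = G.degree v'.val :=
          degree_induce_eq v'.2 (hclosed _ hvK)
        have hvr : v'.val ≠ r := fun h => hrK (h ▸ hvK)
        have hdg : G.degree v'.val ≠ 2 := fun h => hdeg (by rw [hdegeq]; exact h)
        exact hcut v'.val hvr hdg (htransfer v' hvK hcon)
      obtain ⟨u', v', hadj', hu'c, hv'c, hu'conn, hv'conn, hdu', hdv'⟩ :=
        ih (G.induce t) (by omega) hHconn hcard2t ⟨c, hct⟩ hypH
      have hu'K : u'.val ∈ K := by
        rcases u'.2 with h | h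
        · exact h
        · exact absurd (Subtype.ext (show _ = c from h)) hu'c
      have hv'K : v'.val ∈ K := by
        rcases v'.2 with h | h
        · exact h
        · exact absurd (Subtype.ext (show _ = c from h)) hv'c
      refine ⟨u'.val, v'.val, hadj', fun h => hrK (h ▸ hu'K), fun h => hrK (h ▸ hv'K),
        htransfer u' hu'K hu'conn, htransfer v' hv'K hv'conn, ?_, ?_⟩
      · rw [← degree_induce_eq u'.2 (hclosed _ hu'K)]
        exact hdu'
      · rw [← degree_induce_eq v'.2 (hclosed _ hv'K)]
        exact hdv'

theorem exists_adjacent_noncut_degree_two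
    {V : Type*} [Fintype V] [DecidableEq V]
    (G : SimpleGraph V) [DecidableRel G.Adj]
    (hconn : G.Connected) (hcard : 2 ≤ Fintype.card V)
    (hcut : ∀ v : V, G.degree v ≠ 2 → G.IsCutVertex' v)
    (hex : ∃ v : V, ¬ G.IsCutVertex' v) :
    (∀ v : V, ¬ G.IsCutVertex' v → G.degree v = 2) ∧
    ∃ u v : V, G.Adj u v ∧ ¬ G.IsCutVertex' u ∧ ¬ G.IsCutVertex' v ∧
      G.degree u = 2 ∧ G.degree v = 2 := by
  constructor
  · intro v hv
    by_contra hd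
    exact hv (hcut v hd)
  · have hne : Nonempty V := Fintype.card_pos_iff.mp (by omega)
    obtain ⟨r⟩ := hne
    obtain ⟨u, v, hadj, _, _, hu, hv, hdu, hdv⟩ :=
      cut_aux (Fintype.card V) G le_rfl hconn hcard r
        (fun v _ hd => hcut v hd)
    exact ⟨u, v, hadj, fun h => h hu, fun h => h hv, hdu, hdv⟩
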